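/- Let $I$ be a compact interval, $\mathcal{F} = (f_x)_{x\in[0,1]}$ an admissible family, and $\mathcal{T}$ a finite set of continuous strictly monotone functions on $I$ such that for every $x \in [0,1]$ there exist $l_x, u_x \in \mathcal{T}$ with $\mathscr{A}_{l_x} \le \mathscr{A}_{f_x} \le \mathscr{A}_{u_x}$ (pointwise on $\mathcal{P}(I)$). Then there exists a uniquely determined $\mathbf{A}_\mathcal{F}$-invariant mean $K_\mathcal{F} : \mathcal{P}(I) \to I$. -/

import Mathlib

open MeasureTheory Set Filter Topology

noncomputable section

/-- The topological support of a Borel measure on `ℝ`. -/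
def msupp (mu : Measure ℝ) : Set ℝ := {x | ∀ ε > 0, 0 < mu (Metric.ball x ε)}

/-- Infimum of the support. -/
def suppInf (mu : Measure ℝ) : ℝ := sInf (msupp mu)

/-- Supremum of the support. -/
def suppSup (mu : Measure ℝ) : ℝ := sSup (msupp mu)

/-- `γ(P) = [inf supp P, sup supp P]`. -/
def gammaSet (mu : Measure ℝ) : Set ℝ := Icc (suppInf mu) (suppSup mu)

/-- `|γ(P)|`, the diameter of the support. -/
def gammaLen (mu : Measure ℝ) : ℝ := suppSup mu - suppInf mu

/-- `P ∈ 𝒫(I)`: a compactly supported Borel probability measure concentrated on `I`. -/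
def IsCSP (I : Set ℝ) (mu : Measure ℝ) : Prop :=
  IsProbabilityMeasure mu ∧ mu Iᶜ = 0 ∧ IsCompact (closure (msupp mu))

/-- `f ∈ CM(I)`: continuous and strictly monotone on `I`. -/
def CM (f : ℝ → ℝ) (I : Set ℝ) : Prop :=
  ContinuousOn f I ∧ (StrictMonoOn f I ∨ StrictAntiOn f I)

/-- The integral quasiarithmetic mean `𝒜_f(P) = f⁻¹(∫ f dP)` (inverse taken on `I`). -/
def QAM (f : ℝ → ℝ) (I : Set ℝ) (mu : Measure ℝ) : ℝ :=
  Function.invFunOn f I (∫ t, f t ∂mu)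

/-- The Lebesgue σ-algebra on `ℝ` (completion of the Borel σ-algebra w.r.t. Lebesgue measure). -/
def Leb : MeasurableSpace ℝ where
  MeasurableSet' s := NullMeasurableSet s (volume : Measure ℝ)
  measurableSet_empty := MeasurableSet.empty.nullMeasurableSet
  measurableSet_compl := fun _ hs => hs.compl
  measurableSet_iUnion := fun _ hf => NullMeasurableSet.iUnion hf

/-- An admissible family `(f_x)_{x∈[0,1]}`: each `f_x` continuous and strictly monotone on `I`,
and `(t,x) ↦ f_x(t)` measurable w.r.t. the product of the Borel σ-algebra and the
Lebesgue σ-algebra. -/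
def Admissible (F : ℝ → ℝ → ℝ) (I : Set ℝ) : Prop :=
  (∀ x ∈ Icc (0:ℝ) 1, CM (F x) I) ∧
  Measurable[(inferInstance : MeasurableSpace ℝ).prod Leb] (fun p : ℝ × ℝ => F p.2 p.1)

/-- `𝐀_𝓕(P)`: the distribution of `x ↦ 𝒜_{f_x}(P)` under Lebesgue measure on `[0,1]`. -/
def AF (F : ℝ → ℝ → ℝ) (I : Set ℝ) (mu : Measure ℝ) : Measure ℝ :=
  Measure.map (fun x => QAM (F x) I mu) ((volume : Measure ℝ).restrict (Icc 0 1))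

/-- Iterates of `𝐀_𝓕`. -/
def AFiter (F : ℝ → ℝ → ℝ) (I : Set ℝ) (n : ℕ) (mu : Measure ℝ) : Measure ℝ :=
  (AF F I)^[n] mu

/-- A mean on `𝒫(I)`: `M(P) ∈ γ(P)`. -/
def IsMean (I : Set ℝ) (M : Measure ℝ → ℝ) : Prop :=
  ∀ mu : Measure ℝ, IsCSP I mu → M mu ∈ gammaSet mu

/-- `M` is `𝐀_𝓕`-invariant: `M ∘ 𝐀_𝓕 = M` on `𝒫(I)`. -/
def IsInvariantMean (F : ℝ → ℝ → ℝ) (I : Set ℝ) (M : Measure ℝ → ℝ) : Prop :=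
  ∀ mu : Measure ℝ, IsCSP I mu → M (AF F I mu) = M mu

/-- The lower invariant mean `𝓛_𝓕`. -/
def LF (F : ℝ → ℝ → ℝ) (I : Set ℝ) (mu : Measure ℝ) : ℝ :=
  ⨆ n, suppInf (AFiter F I n mu)

/-- The upper invariant mean `𝓤_𝓕`. -/
def UF (F : ℝ → ℝ → ℝ) (I : Set ℝ) (mu : Measure ℝ) : ℝ :=
  ⨅ n, suppSup (AFiter F I n mu)

/-- Variance of a measure on `ℝ`. -/
def Var (mu : Measure ℝ) : ℝ := (∫ x, x ^ 2 ∂mu) - (∫ x, x ∂mu) ^ 2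

/-- The two-point measure `θ·δ_x + (1-θ)·δ_y`. -/
def twoPt (x y θ : ℝ) : Measure ℝ :=
  ENNReal.ofReal θ • Measure.dirac x + ENNReal.ofReal (1 - θ) • Measure.dirac y

-- Stage 1 : support lemmas

theorem measure_compl_msupp (mu : Measure ℝ) : mu (msupp mu)ᶜ = 0 := by
  classical
  -- cover the complement by rational balls of measure zero
  set D : Set (ℚ × ℚ) := {p | mu (Metric.ball (p.1 : ℝ) (p.2 : ℝ)) = 0}
  have hcover : (msupp mu)ᶜ ⊆ ⋃ p ∈ D, Metric.ball (p.1 : ℝ) (p.2 : ℝ) := by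
    intro x hx
    simp only [mem_compl_iff, msupp, mem_setOf_eq, not_forall] at hx
    obtain ⟨ε, hε, hball⟩ := hx
    push_neg at hball
    have hball0 : mu (Metric.ball x ε) = 0 := le_antisymm hball zero_le
    obtain ⟨q, hq⟩ := exists_rat_btwn (show x - ε/4 < x by linarith)
    obtain ⟨r, hr⟩ := exists_rat_btwn (show (ε/4 : ℝ) < ε/2 by linarith)
    refine mem_biUnion (show (q, r) ∈ D from ?_) ?_
    · refine measure_mono_null (fun y hy => ?_) hball0
      have : |y - (q:ℝ)| < r := by simpa [Real.dist_eq] using hy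
      have hxq : |x - (q:ℝ)| < ε/4 := by
        rw [abs_lt]; constructor <;> linarith [hq.1, hq.2]
      have : |y - x| < ε := by
        have := abs_sub_abs_le_abs_sub (y - x) 0
        calc |y - x| = |(y - q) + ((q : ℝ) - x)| := by ring_nf
        _ ≤ |y - (q:ℝ)| + |(q:ℝ) - x| := abs_add_le _ _
        _ < ε := by rw [abs_sub_comm (q:ℝ) x]; linarith [hr.1, hr.2]
      simpa [Real.dist_eq, Metric.mem_ball] using this
    · have : |x - (q:ℝ)| < r := by
        rw [abs_lt]; constructor <;> linarith [hq.1, hq.2, hr.1, hr.2]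
      simpa [Real.dist_eq, Metric.mem_ball] using this
  refine measure_mono_null hcover ?_
  exact (measure_biUnion_null_iff (countable_univ.mono (subset_univ D))).2 fun p hp => hp

theorem msupp_nonempty (mu : Measure ℝ) [IsProbabilityMeasure mu] : (msupp mu).Nonempty := by
  by_contra h
  rw [not_nonempty_iff_eq_empty] at h
  have := measure_compl_msupp mu
  rw [h, compl_empty] at this
  simp [measure_univ] at this

theorem isClosed_msupp (mu : Measure ℝ) : IsClosed (msupp mu) := by
  rw [← isOpen_compl_iff]
  rw [isOpen_iff_mem_nhds]
  intro x hx
  simp only [mem_compl_iff, msupp, mem_setOf_eq, not_forall] at hx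
  obtain ⟨ε, hε, hball⟩ := hx
  push_neg at hball
  have hball0 : mu (Metric.ball x ε) = 0 := le_antisymm hball zero_le
  rw [Metric.mem_nhds_iff]
  refine ⟨ε/2, by linarith, fun y hy => ?_⟩
  simp only [mem_compl_iff, msupp, mem_setOf_eq, not_forall]
  refine ⟨ε/2, by linarith, ?_⟩
  push_neg
  have hsub : Metric.ball y (ε/2) ⊆ Metric.ball x ε := by
    intro z hz
    have h1 : dist z y < ε/2 := hz
    have h2 : dist y x < ε/2 := hy
    have := dist_triangle z y x
    simpa [Metric.mem_ball] using lt_of_le_of_lt this (by linarith)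
  exact measure_mono_null hsub hball0 ▸ le_rfl

theorem msupp_subset_of_null {s : Set ℝ} (hs : IsClosed s) (mu : Measure ℝ)
    (h : mu sᶜ = 0) : msupp mu ⊆ s := by
  intro x hx
  by_contra hxs
  obtain ⟨ε, hε, hb⟩ := Metric.isOpen_iff.1 hs.isOpen_compl x hxs
  have : mu (Metric.ball x ε) = 0 := measure_mono_null hb h
  exact absurd this (hx ε hε).ne'

-- Stage 2: gamma and QAM basics
section S2
variable {a b : ℝ} {mu : Measure ℝ}

theorem csp_msupp_subset (hmu : IsCSP (Icc a b) mu) : msupp mu ⊆ Icc a b :=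
  msupp_subset_of_null isClosed_Icc mu hmu.2.1

theorem csp_suppInf_mem (hmu : IsCSP (Icc a b) mu) : suppInf mu ∈ msupp mu := by
  haveI := hmu.1
  exact (isClosed_msupp mu).csInf_mem (msupp_nonempty mu)
    ((bddBelow_Icc (a := b) (b := a)).mono (csp_msupp_subset hmu))

theorem csp_suppSup_mem (hmu : IsCSP (Icc a b) mu) : suppSup mu ∈ msupp mu := by
  haveI := hmu.1
  exact (isClosed_msupp mu).csSup_mem (msupp_nonempty mu)
    ((bddAbove_Icc (a := a) (b := b)).mono (csp_msupp_subset hmu))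

theorem csp_suppInf_le_suppSup (hmu : IsCSP (Icc a b) mu) : suppInf mu ≤ suppSup mu := by
  haveI := hmu.1
  exact csInf_le_csSup (msupp_nonempty mu) ((bddBelow_Icc (a := b) (b := a)).mono (csp_msupp_subset hmu))
    ((bddAbove_Icc (a := a) (b := b)).mono (csp_msupp_subset hmu))

theorem csp_gamma_subset (hmu : IsCSP (Icc a b) mu) : gammaSet mu ⊆ Icc a b := by
  intro t ht
  have h1 := csp_msupp_subset hmu (csp_suppInf_mem hmu)
  have h2 := csp_msupp_subset hmu (csp_suppSup_mem hmu)
  exact ⟨le_trans h1.1 ht.1, le_trans ht.2 h2.2⟩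

theorem csp_msupp_subset_gamma (hmu : IsCSP (Icc a b) mu) : msupp mu ⊆ gammaSet mu := by
  haveI := hmu.1
  intro t ht
  refine ⟨csInf_le ((bddBelow_Icc (a := b) (b := a)).mono (csp_msupp_subset hmu)) ht,
    le_csSup ((bddAbove_Icc (a := a) (b := b)).mono (csp_msupp_subset hmu)) ht⟩

theorem csp_ae_gamma (hmu : IsCSP (Icc a b) mu) : ∀ᵐ t ∂mu, t ∈ gammaSet mu := by
  rw [ae_iff]
  refine measure_mono_null (fun t ht => ?_) (measure_compl_msupp mu)
  exact fun hts => ht (csp_msupp_subset_gamma hmu hts)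

theorem csp_ae_I (hmu : IsCSP (Icc a b) mu) : ∀ᵐ t ∂mu, t ∈ Icc a b :=
  (csp_ae_gamma hmu).mono fun t ht => csp_gamma_subset hmu ht

theorem csp_integrable {f : ℝ → ℝ} (hf : ContinuousOn f (Icc a b))
    (hmu : IsCSP (Icc a b) mu) : Integrable f mu := by
  haveI := hmu.1
  have hres : mu.restrict (Icc a b) = mu :=
    Measure.restrict_eq_self_of_ae_mem (csp_ae_I hmu)
  have hmeas : AEStronglyMeasurable f mu := by
    have h2 : AEMeasurable f (mu.restrict (Icc a b)) := hf.aemeasurable measurableSet_Icc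
    rw [hres] at h2
    exact h2.aestronglyMeasurable
  obtain ⟨C, hC⟩ := isCompact_Icc.exists_bound_of_continuousOn hf
  exact Integrable.mono' (integrable_const C) hmeas
    ((csp_ae_I hmu).mono fun t ht => hC t ht)

/-- Main characterization of the quasiarithmetic mean. -/
theorem QAM_spec {f : ℝ → ℝ} (hf : CM f (Icc a b)) (hmu : IsCSP (Icc a b) mu) :
    QAM f (Icc a b) mu ∈ gammaSet mu ∧ f (QAM f (Icc a b) mu) = ∫ t, f t ∂mu := by
  haveI := hmu.1
  set α := suppInf mu
  set β := suppSup mu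
  have hαβ : α ≤ β := csp_suppInf_le_suppSup hmu
  have hγI : gammaSet mu ⊆ Icc a b := csp_gamma_subset hmu
  have hα : α ∈ Icc a b := hγI ⟨le_rfl, hαβ⟩
  have hβ : β ∈ Icc a b := hγI ⟨hαβ, le_rfl⟩
  have hint : Integrable f mu := csp_integrable hf.1 hmu
  have hgsub : Icc α β ⊆ Icc a b := by
    intro t ht; exact ⟨le_trans hα.1 ht.1, le_trans ht.2 hβ.2⟩
  -- existence of a preimage in Icc α β
  have hex : ∃ t ∈ Icc α β, f t = ∫ t, f t ∂mu := by
    have hmem : (∫ t, f t ∂mu) ∈ f '' Icc α β := by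
      rcases hf.2 with hmono | hanti
      · have h1 : f α ≤ ∫ t, f t ∂mu := by
          have := integral_mono_ae (integrable_const (f α)) hint
            ((csp_ae_gamma hmu).mono fun t ht => hmono.monotoneOn hα (hγI ht) ht.1)
          simpa using this
        have h2 : (∫ t, f t ∂mu) ≤ f β := by
          have := integral_mono_ae hint (integrable_const (f β))
            ((csp_ae_gamma hmu).mono fun t ht => hmono.monotoneOn (hγI ht) hβ ht.2)
          simpa using this
        exact intermediate_value_Icc hαβ (hf.1.mono hgsub) ⟨h1, h2⟩
      · have h1 : f β ≤ ∫ t, f t ∂mu := by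
          have := integral_mono_ae (integrable_const (f β)) hint
            ((csp_ae_gamma hmu).mono fun t ht => hanti.antitoneOn (hγI ht) hβ ht.2)
          simpa using this
        have h2 : (∫ t, f t ∂mu) ≤ f α := by
          have := integral_mono_ae hint (integrable_const (f α))
            ((csp_ae_gamma hmu).mono fun t ht => hanti.antitoneOn hα (hγI ht) ht.1)
          simpa using this
        exact intermediate_value_Icc' hαβ (hf.1.mono hgsub) ⟨h1, h2⟩
    obtain ⟨t, ht, hft⟩ := hmem
    exact ⟨t, ht, hft⟩
  obtain ⟨t, ht, hft⟩ := hex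
  have hex' : ∃ t ∈ Icc a b, f t = ∫ t, f t ∂mu := ⟨t, hgsub ht, hft⟩
  have hqI : QAM f (Icc a b) mu ∈ Icc a b := Function.invFunOn_mem hex'
  have hqeq : f (QAM f (Icc a b) mu) = ∫ t, f t ∂mu := Function.invFunOn_eq hex'
  have hinj : InjOn f (Icc a b) := by
    rcases hf.2 with hmono | hanti
    · exact hmono.injOn
    · exact hanti.injOn
  have : QAM f (Icc a b) mu = t := hinj hqI (hgsub ht) (hqeq.trans hft.symm)
  exact ⟨this ▸ ht, hqeq⟩

end S2

-- Stage 3: measurability of the QAM family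


theorem helper_integral {α β : Type*} [MeasurableSpace α] [MeasurableSpace β]
    (mu : Measure α) [SFinite mu] {G : α × β → ℝ} (hG : Measurable G) :
    Measurable fun y => ∫ x, G (x, y) ∂mu :=
  hG.stronglyMeasurable.integral_prod_left'.measurable

theorem helper_section {α β : Type*} [MeasurableSpace α] [MeasurableSpace β]
    (s : α) {G : α × β → ℝ} (hG : Measurable G) :
    Measurable fun x : β => G (s, x) :=
  hG.comp measurable_prodMk_left

section S3
variable {a b : ℝ} {mu : Measure ℝ} {F : ℝ → ℝ → ℝ}

theorem leb_of_borel {s : Set ℝ} (hs : MeasurableSet s) : MeasurableSet[Leb] s :=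
  hs.nullMeasurableSet

theorem qam_family_aemeasurable (hab : a < b) (hF : Admissible F (Icc a b))
    (hmu : IsCSP (Icc a b) mu) :
    AEMeasurable (fun x => QAM (F x) (Icc a b) mu) (volume.restrict (Icc (0:ℝ) 1)) := by
  haveI := hmu.1
  set A : ℝ → ℝ := fun x => QAM (F x) (Icc a b) mu with hA
  set c : ℝ → ℝ := fun x => ∫ t, F x t ∂mu with hc
  -- measurability of c w.r.t. Leb
  have hG : Measurable[(inferInstance : MeasurableSpace ℝ).prod Leb]
      (fun p : ℝ × ℝ => F p.2 p.1) := hF.2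
  have hcm : Measurable[Leb] c :=
    @helper_integral ℝ ℝ _ Leb mu _ _ hG
  -- sections are Leb-measurable
  have hsec : ∀ s : ℝ, Measurable[Leb] (fun x => F x s) := fun s =>
    @helper_section ℝ ℝ _ Leb s _ hG
  -- the set where F x is increasing
  set E : Set ℝ := {x | F x a < F x b} with hE
  have hEm : MeasurableSet[Leb] E := measurableSet_lt (hsec a) (hsec b)
  have haI : a ∈ Icc a b := ⟨le_rfl, le_of_lt hab⟩
  have hbI : b ∈ Icc a b := ⟨le_of_lt hab, le_rfl⟩
  -- key properties for x ∈ [0,1]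
  have hkey : ∀ x ∈ Icc (0:ℝ) 1, A x ∈ Icc a b ∧ F x (A x) = c x ∧
      (x ∈ E ↔ StrictMonoOn (F x) (Icc a b)) := by
    intro x hx
    have hCM := hF.1 x hx
    have hq := QAM_spec hCM hmu
    refine ⟨csp_gamma_subset hmu hq.1, hq.2, ?_, fun h => h haI hbI hab⟩
    intro hxE
    rcases hCM.2 with h | h
    · exact h
    · exact absurd (h haI hbI hab) (asymm hxE)
  -- strict anti on the complement
  have hkey2 : ∀ x ∈ Icc (0:ℝ) 1, x ∉ E → StrictAntiOn (F x) (Icc a b) := by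
    intro x hx hxE
    rcases (hF.1 x hx).2 with h | h
    · exact absurd ((hkey x hx).2.2.2 h) hxE
    · exact h
  -- modified function
  set A' : ℝ → ℝ := fun x => if x ∈ Icc (0:ℝ) 1 then A x else a with hA'
  have hlevels : ∀ s : ℝ, MeasurableSet[Leb] (A' ⁻¹' Iic s) := by
    intro s
    rcases lt_or_ge s a with hs | hs
    · have : A' ⁻¹' Iic s = ∅ := by
        ext x
        simp only [mem_preimage, mem_Iic, mem_empty_iff_false, iff_false, not_le, hA']
        split_ifs with hx
        · exact lt_of_lt_of_le hs ((hkey x hx).1).1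
        · exact hs
      rw [this]; exact leb_of_borel MeasurableSet.empty
    rcases le_or_gt b s with hbs | hbs
    · have : A' ⁻¹' Iic s = univ := by
        ext x
        simp only [mem_preimage, mem_Iic, mem_univ, iff_true, hA']
        split_ifs with hx
        · exact le_trans ((hkey x hx).1).2 hbs
        · exact le_trans (le_of_lt hab) hbs
      rw [this]; exact leb_of_borel MeasurableSet.univ
    -- a ≤ s < b
    have hsI : s ∈ Icc a b := ⟨hs, le_of_lt hbs⟩
    have : A' ⁻¹' Iic s = (Icc (0:ℝ) 1)ᶜ ∪
        (Icc (0:ℝ) 1 ∩ ((E ∩ {x | c x ≤ F x s}) ∪ (Eᶜ ∩ {x | F x s ≤ c x}))) := by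
      ext x
      simp only [mem_preimage, mem_Iic, hA', mem_union, mem_compl_iff, mem_inter_iff,
        mem_setOf_eq]
      split_ifs with hx
      · simp only [hx, not_true_eq_false, false_or, true_and]
        obtain ⟨hAI, hFA, hEiff⟩ := hkey x hx
        constructor
        · intro hAs
          by_cases hxE : x ∈ E
          · exact Or.inl ⟨hxE, hFA ▸ (hEiff.1 hxE).monotoneOn hAI hsI hAs⟩
          · exact Or.inr ⟨hxE, hFA ▸ (hkey2 x hx hxE).antitoneOn hAI hsI hAs⟩
        · rintro (⟨hxE, hcs⟩ | ⟨hxE, hcs⟩)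
          · by_contra hAs
            push_neg at hAs
            exact absurd (hFA ▸ hcs) (not_le.2 ((hEiff.1 hxE) hsI hAI hAs))
          · by_contra hAs
            push_neg at hAs
            exact absurd (hFA ▸ hcs) (not_le.2 ((hkey2 x hx hxE) hsI hAI hAs))
      · simp [hx, hs]
    rw [this]
    have h01 : MeasurableSet[Leb] (Icc (0:ℝ) 1) := leb_of_borel measurableSet_Icc
    have hc1 : MeasurableSet[Leb] {x | c x ≤ F x s} := measurableSet_le hcm (hsec s)
    have hc2 : MeasurableSet[Leb] {x | F x s ≤ c x} := measurableSet_le (hsec s) hcm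
    exact MeasurableSet.union h01.compl
      (h01.inter ((hEm.inter hc1).union (hEm.compl.inter hc2)))
  -- conclude
  have hA'm : Measurable[Leb] A' := measurable_of_Iic hlevels
  have hnull : NullMeasurable A' (volume : Measure ℝ) := fun s hs => hA'm hs
  have haem : AEMeasurable A' (volume : Measure ℝ) := hnull.aemeasurable
  have : AEMeasurable A' (volume.restrict (Icc (0:ℝ) 1)) := haem.restrict
  refine this.congr ?_
  filter_upwards [ae_restrict_mem measurableSet_Icc] with x hx
  exact if_pos hx
end S3

-- Stage 4: AF basics


section S4
variable {a b : ℝ} {mu : Measure ℝ} {F : ℝ → ℝ → ℝ}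

instance : IsProbabilityMeasure ((volume : Measure ℝ).restrict (Icc 0 1)) :=
  ⟨by simp [Real.volume_Icc]⟩

theorem AF_conc (hab : a < b) (hF : Admissible F (Icc a b)) (hmu : IsCSP (Icc a b) mu)
    {c d : ℝ} (h : ∀ x ∈ Icc (0:ℝ) 1, QAM (F x) (Icc a b) mu ∈ Icc c d) :
    IsCSP (Icc c d) (AF F (Icc a b) mu) := by
  have hA := qam_family_aemeasurable hab hF hmu
  have hprob : IsProbabilityMeasure (AF F (Icc a b) mu) :=
    Measure.isProbabilityMeasure_map hA
  have hnull : AF F (Icc a b) mu (Icc c d)ᶜ = 0 := by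
    rw [AF, Measure.map_apply_of_aemeasurable hA measurableSet_Icc.compl,
      Measure.restrict_apply' measurableSet_Icc]
    have : (fun x => QAM (F x) (Icc a b) mu) ⁻¹' (Icc c d)ᶜ ∩ Icc 0 1 = ∅ := by
      ext x
      simp only [mem_inter_iff, mem_preimage, mem_compl_iff, mem_empty_iff_false, iff_false,
        not_and]
      exact fun hc hx => hc (h x hx)
    rw [this, measure_empty]
  refine ⟨hprob, hnull, ?_⟩
  refine (isCompact_Icc (a := c) (b := d)).of_isClosed_subset isClosed_closure ?_
  rw [IsClosed.closure_subset_iff isClosed_Icc]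
  exact msupp_subset_of_null isClosed_Icc _ hnull

theorem AF_csp (hab : a < b) (hF : Admissible F (Icc a b)) (hmu : IsCSP (Icc a b) mu) :
    IsCSP (Icc a b) (AF F (Icc a b) mu) :=
  AF_conc hab hF hmu fun x hx =>
    csp_gamma_subset hmu (QAM_spec (hF.1 x hx) hmu).1

theorem AF_gamma_subset (hab : a < b) (hF : Admissible F (Icc a b))
    (hmu : IsCSP (Icc a b) mu) : gammaSet (AF F (Icc a b) mu) ⊆ gammaSet mu := by
  have h1 : IsCSP (Icc (suppInf mu) (suppSup mu)) (AF F (Icc a b) mu) :=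
    AF_conc hab hF hmu fun x hx => (QAM_spec (hF.1 x hx) hmu).1
  exact csp_gamma_subset h1

theorem csp_mem_gamma_self (hmu : IsCSP (Icc a b) mu) :
    suppInf mu ∈ gammaSet mu ∧ suppSup mu ∈ gammaSet mu :=
  ⟨⟨le_rfl, csp_suppInf_le_suppSup hmu⟩, ⟨csp_suppInf_le_suppSup hmu, le_rfl⟩⟩

theorem AFiter_csp (hab : a < b) (hF : Admissible F (Icc a b)) (hmu : IsCSP (Icc a b) mu) :
    ∀ n, IsCSP (Icc a b) (AFiter F (Icc a b) n mu) := by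
  intro n
  induction n with
  | zero => exact hmu
  | succ n ih =>
    rw [AFiter, Function.iterate_succ_apply']
    exact AF_csp hab hF ih

theorem AFiter_gamma_subset (hab : a < b) (hF : Admissible F (Icc a b))
    (hmu : IsCSP (Icc a b) mu) (n : ℕ) :
    gammaSet (AFiter F (Icc a b) (n+1) mu) ⊆ gammaSet (AFiter F (Icc a b) n mu) := by
  rw [AFiter, Function.iterate_succ_apply']
  exact AF_gamma_subset hab hF (AFiter_csp hab hF hmu n)
end S4

-- Stage 5: integral splitting and gap lemmas
section S5
variable {a b : ℝ} {mu : Measure ℝ}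

theorem integral_split (hmu : IsCSP (Icc a b) mu) {f : ℝ → ℝ}
    (hcont : ContinuousOn f (Icc a b)) (hmono : StrictMonoOn f (Icc a b)) :
    f (suppInf mu) * (mu (Iic ((suppInf mu + suppSup mu)/2))).toReal
      + f ((suppInf mu + suppSup mu)/2)
        * (1 - (mu (Iic ((suppInf mu + suppSup mu)/2))).toReal) ≤ (∫ t, f t ∂mu) ∧
    (∫ t, f t ∂mu) ≤ f ((suppInf mu + suppSup mu)/2)
        * (mu (Iic ((suppInf mu + suppSup mu)/2))).toReal
      + f (suppSup mu) * (1 - (mu (Iic ((suppInf mu + suppSup mu)/2))).toReal) := by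
  haveI := hmu.1
  set α := suppInf mu
  set β := suppSup mu
  set m := (α + β)/2 with hm
  set θ := (mu (Iic m)).toReal with hθ
  have hαβ : α ≤ β := csp_suppInf_le_suppSup hmu
  have hαm : α ≤ m := by rw [hm]; linarith
  have hmβ : m ≤ β := by rw [hm]; linarith
  have hγI : gammaSet mu ⊆ Icc a b := csp_gamma_subset hmu
  have hαI : α ∈ Icc a b := hγI ⟨le_rfl, hαβ⟩
  have hβI : β ∈ Icc a b := hγI ⟨hαβ, le_rfl⟩
  have hmI : m ∈ Icc a b := hγI ⟨hαm, hmβ⟩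
  have hint : Integrable f mu := csp_integrable hcont hmu
  have hglow : Integrable (fun t => f m + (Iic m).indicator (fun _ => f α - f m) t) mu :=
    (integrable_const _).add ((integrable_const _).indicator measurableSet_Iic)
  have hgup : Integrable (fun t => f β + (Iic m).indicator (fun _ => f m - f β) t) mu :=
    (integrable_const _).add ((integrable_const _).indicator measurableSet_Iic)
  have hIg : (∫ t, (f m + (Iic m).indicator (fun _ => f α - f m) t) ∂mu)
      = f α * θ + f m * (1 - θ) := by
    rw [integral_add (integrable_const _) ((integrable_const _).indicator measurableSet_Iic),
      integral_const, integral_indicator_const _ measurableSet_Iic]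
    simp only [measureReal_def, hθ, measure_univ, ENNReal.toReal_one, one_smul, smul_eq_mul]
    ring
  have hIh : (∫ t, (f β + (Iic m).indicator (fun _ => f m - f β) t) ∂mu)
      = f m * θ + f β * (1 - θ) := by
    rw [integral_add (integrable_const _) ((integrable_const _).indicator measurableSet_Iic),
      integral_const, integral_indicator_const _ measurableSet_Iic]
    simp only [measureReal_def, hθ, measure_univ, ENNReal.toReal_one, one_smul, smul_eq_mul]
    ring
  constructor
  · rw [← hIg]
    refine integral_mono_ae hglow hint ((csp_ae_gamma hmu).mono fun t ht => ?_)
    have htI : t ∈ Icc a b := hγI ht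
    by_cases htm : t ∈ Iic m
    · simp only [indicator_of_mem htm]
      have : f α ≤ f t := hmono.monotoneOn hαI htI ht.1
      linarith
    · simp only [indicator_of_notMem htm]
      have : f m ≤ f t := hmono.monotoneOn hmI htI (le_of_lt (not_le.1 htm))
      linarith
  · rw [← hIh]
    refine integral_mono_ae hint hgup ((csp_ae_gamma hmu).mono fun t ht => ?_)
    have htI : t ∈ Icc a b := hγI ht
    by_cases htm : t ∈ Iic m
    · simp only [indicator_of_mem htm]
      have : f t ≤ f m := hmono.monotoneOn htI hmI htm
      linarith
    · simp only [indicator_of_notMem htm]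
      have : f t ≤ f β := hmono.monotoneOn htI hβI ht.2
      linarith

theorem gap_lemma (hab : a < b) {f : ℝ → ℝ} (hcont : ContinuousOn f (Icc a b))
    (hmono : StrictMonoOn f (Icc a b)) {L : ℝ} (hL : 0 < L) (hLab : L ≤ b - a) :
    ∃ ρ > 0, ∀ α β : ℝ, a ≤ α → β ≤ b → L ≤ β - α →
      (∀ q ∈ Icc a b, (f α + f ((α+β)/2))/2 ≤ f q → α + ρ < q) ∧
      (∀ q ∈ Icc a b, f q ≤ (f ((α+β)/2) + f β)/2 → q < β - ρ) := by
  -- the modulus of increase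
  set S : Set (ℝ × ℝ) := {p | p.1 ∈ Icc a b ∧ p.2 ∈ Icc a b ∧ p.1 + L/2 ≤ p.2} with hS
  have hScomp : IsCompact S := by
    refine (isCompact_Icc.prod isCompact_Icc).of_isClosed_subset ?_ (fun p hp => ⟨hp.1, hp.2.1⟩)
    have h1 : IsClosed {p : ℝ × ℝ | p.1 ∈ Icc a b} := isClosed_Icc.preimage continuous_fst
    have h2 : IsClosed {p : ℝ × ℝ | p.2 ∈ Icc a b} := isClosed_Icc.preimage continuous_snd
    have h3 : IsClosed {p : ℝ × ℝ | p.1 + L/2 ≤ p.2} :=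
      isClosed_le (continuous_fst.add continuous_const) continuous_snd
    exact (h1.inter (h2.inter h3))
  have hSne : S.Nonempty := by
    refine ⟨(a, a + L/2), ⟨le_rfl, le_of_lt hab⟩, ⟨?_, ?_⟩, le_rfl⟩ <;> [linarith; linarith]
  have hgc : ContinuousOn (fun p : ℝ × ℝ => f p.2 - f p.1) S := by
    refine ContinuousOn.sub ?_ ?_
    · exact hcont.comp continuous_snd.continuousOn fun p hp => hp.2.1
    · exact hcont.comp continuous_fst.continuousOn fun p hp => hp.1
  obtain ⟨p0, hp0S, hp0min⟩ := hScomp.exists_isMinOn hSne hgc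
  set η := f p0.2 - f p0.1 with hη
  have hηpos : 0 < η := by
    rw [hη]
    have : p0.1 < p0.2 := by have := hp0S.2.2; linarith
    exact sub_pos.2 (hmono hp0S.1 hp0S.2.1 this)
  have hηmin : ∀ x y : ℝ, x ∈ Icc a b → y ∈ Icc a b → x + L/2 ≤ y → η ≤ f y - f x :=
    fun x y hx hy hxy => hp0min (show ((x,y) : ℝ × ℝ) ∈ S from ⟨hx, hy, hxy⟩)
  -- uniform continuity
  obtain ⟨δ, hδpos, hδ⟩ := (Metric.uniformContinuousOn_iff).1
    (isCompact_Icc.uniformContinuousOn_of_continuous hcont) (η/2) (by linarith)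
  refine ⟨δ/2, by linarith, fun α β hα hβ hLαβ => ?_⟩
  have hαβ : α ≤ β := by linarith
  have hαI : α ∈ Icc a b := ⟨hα, by linarith⟩
  have hβI : β ∈ Icc a b := ⟨by linarith, hβ⟩
  set m := (α + β)/2 with hm
  have hmI : m ∈ Icc a b := ⟨by rw [hm]; linarith [hαI.1], by rw [hm]; linarith [hβI.2]⟩
  have hαm : α + L/2 ≤ m := by rw [hm]; linarith
  have hmβ : m + L/2 ≤ β := by rw [hm]; linarith
  have hfαm : η ≤ f m - f α := hηmin α m hαI hmI hαm
  have hfmβ : η ≤ f β - f m := hηmin m β hmI hβI hmβ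
  constructor
  · intro q hq hfq
    by_contra hqle
    push_neg at hqle
    have hqα : α < q := by
      by_contra hqα
      push_neg at hqα
      have : f q ≤ f α := hmono.monotoneOn hq hαI hqα
      linarith
    have hdist : dist q α < δ := by
      rw [Real.dist_eq, abs_of_pos (by linarith : (0:ℝ) < q - α)]
      linarith
    have := hδ q hq α hαI hdist
    rw [Real.dist_eq] at this
    have habs : f q - f α < η/2 := lt_of_le_of_lt (le_abs_self _) this
    linarith
  · intro q hq hfq
    by_contra hqle
    push_neg at hqle
    have hqβ : q < β := by
      by_contra hqβ
      push_neg at hqβ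
      have : f β ≤ f q := hmono.monotoneOn hβI hq hqβ
      linarith
    have hdist : dist q β < δ := by
      rw [Real.dist_eq, abs_of_neg (by linarith : q - β < 0)]
      linarith
    have := hδ q hq β hβI hdist
    rw [Real.dist_eq] at this
    have habs : f β - f q < η/2 := by
      have h2 : |f β - f q| < η/2 := by rwa [abs_sub_comm]
      exact lt_of_le_of_lt (le_abs_self _) h2
    linarith
end S5

-- Stage 6: one-step contraction
section S6
variable {a b : ℝ} {F : ℝ → ℝ → ℝ}

theorem AF_contract (hab : a < b) (hF : Admissible F (Icc a b))
    (T : Finset (ℝ → ℝ)) (hT : ∀ f ∈ T, CM f (Icc a b))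
    (hbd : ∀ x ∈ Icc (0:ℝ) 1, ∃ l ∈ T, ∃ u ∈ T, ∀ mu : Measure ℝ, IsCSP (Icc a b) mu →
      QAM l (Icc a b) mu ≤ QAM (F x) (Icc a b) mu ∧
      QAM (F x) (Icc a b) mu ≤ QAM u (Icc a b) mu)
    {L : ℝ} (hL : 0 < L) :
    ∃ ρ > 0, ∀ mu : Measure ℝ, IsCSP (Icc a b) mu → L ≤ gammaLen mu →
      gammaLen (AF F (Icc a b) mu) ≤ gammaLen mu - ρ := by
  by_cases hLab : L ≤ b - a
  swap
  · refine ⟨1, one_pos, fun mu hmu hlen => absurd hlen (not_le.2 ?_)⟩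
    have h1 := csp_gamma_subset hmu (csp_mem_gamma_self hmu).1
    have h2 := csp_gamma_subset hmu (csp_mem_gamma_self hmu).2
    have : gammaLen mu ≤ b - a := by
      rw [gammaLen]; linarith [h1.1, h2.2]
    linarith [not_le.1 hLab]
  obtain ⟨l0, hl0, -⟩ := hbd 0 ⟨le_rfl, zero_le_one⟩
  -- increasing versions of the comparison functions
  have hinc : ∀ l ∈ T, ∃ f : ℝ → ℝ, ContinuousOn f (Icc a b) ∧ StrictMonoOn f (Icc a b) ∧
      ∀ mu : Measure ℝ, IsCSP (Icc a b) mu →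
        f (QAM l (Icc a b) mu) = ∫ t, f t ∂mu := by
    intro l hl
    rcases (hT l hl).2 with hmono | hanti
    · exact ⟨l, (hT l hl).1, hmono, fun mu hmu => (QAM_spec (hT l hl) hmu).2⟩
    · refine ⟨fun t => -(l t), ((hT l hl).1).neg, hanti.neg, fun mu hmu => ?_⟩
      show -(l (QAM l (Icc a b) mu)) = ∫ t, -(l t) ∂mu
      rw [integral_neg, (QAM_spec (hT l hl) hmu).2]
  choose! finc hfc hfm hfq using hinc
  choose! ρf hρpos hρ using fun l (hl : l ∈ T) =>
    gap_lemma hab (hfc l hl) (hfm l hl) hL hLab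
  set ρ : ℝ := T.inf' ⟨l0, hl0⟩ ρf with hρdef
  have hρ0 : 0 < ρ := by
    rw [hρdef]
    exact (Finset.lt_inf'_iff ..).2 fun l hl => hρpos l hl
  have hρle : ∀ l ∈ T, ρ ≤ ρf l := fun l hl => Finset.inf'_le _ hl
  refine ⟨ρ, hρ0, fun mu hmu hlen => ?_⟩
  haveI := hmu.1
  set α := suppInf mu with hα
  set β := suppSup mu with hβ
  set m := (α + β)/2 with hm
  set θ := (mu (Iic m)).toReal with hθ
  have hθ0 : 0 ≤ θ := ENNReal.toReal_nonneg
  have hθ1 : θ ≤ 1 := by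
    rw [hθ]
    have h1 : mu (Iic m) ≤ 1 := prob_le_one
    simpa using ENNReal.toReal_mono ENNReal.one_ne_top h1
  have hαβ : α ≤ β := csp_suppInf_le_suppSup hmu
  have hαI : α ∈ Icc a b := csp_gamma_subset hmu (csp_mem_gamma_self hmu).1
  have hβI : β ∈ Icc a b := csp_gamma_subset hmu (csp_mem_gamma_self hmu).2
  have hlen' : L ≤ β - α := hlen
  -- bounds for comparison means
  have hqmem : ∀ l ∈ T, QAM l (Icc a b) mu ∈ Icc α β := fun l hl => (QAM_spec (hT l hl) hmu).1
  rcases le_or_gt θ (1/2) with hcase | hcase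
  · -- all iterated means move up by ρ
    have hq : ∀ x ∈ Icc (0:ℝ) 1, QAM (F x) (Icc a b) mu ∈ Icc (α + ρ) β := by
      intro x hx
      obtain ⟨l, hl, u, hu, hlu⟩ := hbd x hx
      have hxγ : QAM (F x) (Icc a b) mu ∈ gammaSet mu := (QAM_spec (hF.1 x hx) hmu).1
      refine ⟨?_, hxγ.2⟩
      set q := QAM l (Icc a b) mu with hqdef
      have hqI : q ∈ Icc a b := by
        have := hqmem l hl
        exact ⟨le_trans hαI.1 this.1, le_trans this.2 hβI.2⟩
      have hsplit := (integral_split hmu (hfc l hl) (hfm l hl)).1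
      have hfαm : finc l α ≤ finc l m :=
        (hfm l hl).monotoneOn hαI (⟨by simp only [hm]; linarith [hαI.1], by simp only [hm]; linarith [hβI.2]⟩)
          (by simp only [hm]; linarith)
      have hbound : (finc l α + finc l m)/2 ≤ finc l q := by
        rw [hfq l hl mu hmu]
        nlinarith [hsplit]
      have := (hρ l hl α β hαI.1 hβI.2 hlen').1 q hqI hbound
      have hρρf : ρ ≤ ρf l := hρle l hl
      linarith [(hlu mu hmu).1]
    have hcsp2 := AF_conc hab hF hmu hq
    have h1 := csp_gamma_subset hcsp2 (csp_mem_gamma_self hcsp2).1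
    have h2 := csp_gamma_subset hcsp2 (csp_mem_gamma_self hcsp2).2
    rw [gammaLen, gammaLen]
    linarith [h1.1, h2.2]
  · -- all iterated means move down by ρ
    have hq : ∀ x ∈ Icc (0:ℝ) 1, QAM (F x) (Icc a b) mu ∈ Icc α (β - ρ) := by
      intro x hx
      obtain ⟨l, hl, u, hu, hlu⟩ := hbd x hx
      have hxγ : QAM (F x) (Icc a b) mu ∈ gammaSet mu := (QAM_spec (hF.1 x hx) hmu).1
      refine ⟨hxγ.1, ?_⟩
      set q := QAM u (Icc a b) mu with hqdef
      have hqI : q ∈ Icc a b := by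
        have := hqmem u hu
        exact ⟨le_trans hαI.1 this.1, le_trans this.2 hβI.2⟩
      have hsplit := (integral_split hmu (hfc u hu) (hfm u hu)).2
      have hfmβ : finc u m ≤ finc u β :=
        (hfm u hu).monotoneOn (⟨by simp only [hm]; linarith [hαI.1], by simp only [hm]; linarith [hβI.2]⟩)
          hβI (by simp only [hm]; linarith)
      have hbound : finc u q ≤ (finc u m + finc u β)/2 := by
        rw [hfq u hu mu hmu]
        nlinarith [hsplit]
      have := (hρ u hu α β hαI.1 hβI.2 hlen').2 q hqI hbound
      have hρρf : ρ ≤ ρf u := hρle u hu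
      linarith [(hlu mu hmu).2]
    have hcsp2 := AF_conc hab hF hmu hq
    have h1 := csp_gamma_subset hcsp2 (csp_mem_gamma_self hcsp2).1
    have h2 := csp_gamma_subset hcsp2 (csp_mem_gamma_self hcsp2).2
    rw [gammaLen, gammaLen]
    linarith [h1.1, h2.2]
end S6

-- Stage 7: final assembly

section S7
variable {a b : ℝ} {F : ℝ → ℝ → ℝ}

theorem main_lt (hab : a < b) (hF : Admissible F (Icc a b))
    (T : Finset (ℝ → ℝ)) (hT : ∀ f ∈ T, CM f (Icc a b))
    (hbd : ∀ x ∈ Icc (0:ℝ) 1, ∃ l ∈ T, ∃ u ∈ T, ∀ mu : Measure ℝ, IsCSP (Icc a b) mu →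
      QAM l (Icc a b) mu ≤ QAM (F x) (Icc a b) mu ∧
      QAM (F x) (Icc a b) mu ≤ QAM u (Icc a b) mu) :
    ∃ Kmean : Measure ℝ → ℝ,
      (IsMean (Icc a b) Kmean ∧ IsInvariantMean F (Icc a b) Kmean) ∧
      ∀ K' : Measure ℝ → ℝ, IsMean (Icc a b) K' ∧ IsInvariantMean F (Icc a b) K' →
        ∀ mu : Measure ℝ, IsCSP (Icc a b) mu → K' mu = Kmean mu := by
  set I : Set ℝ := Icc a b with hI
  -- basic facts about the iterates
  have hiter0 : ∀ mu : Measure ℝ, AFiter F I 0 mu = mu := fun mu => rfl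
  have hiterS : ∀ (n : ℕ) (mu : Measure ℝ),
      AFiter F I (n+1) mu = AF F I (AFiter F I n mu) := fun n mu => by
    rw [AFiter, AFiter, Function.iterate_succ_apply']
  have hcsp : ∀ mu : Measure ℝ, IsCSP I mu → ∀ n, IsCSP I (AFiter F I n mu) :=
    fun mu hmu n => AFiter_csp hab hF hmu n
  have hmono : ∀ mu : Measure ℝ, IsCSP I mu → ∀ m n, m ≤ n →
      suppInf (AFiter F I m mu) ≤ suppInf (AFiter F I n mu) ∧
      suppSup (AFiter F I n mu) ≤ suppSup (AFiter F I m mu) := by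
    intro mu hmu m n hmn
    induction n, hmn using Nat.le_induction with
    | base => exact ⟨le_rfl, le_rfl⟩
    | succ n hmn ih =>
      have hsub := AFiter_gamma_subset hab hF hmu n
      have h1 := hsub (csp_mem_gamma_self (hcsp mu hmu (n+1))).1
      have h2 := hsub (csp_mem_gamma_self (hcsp mu hmu (n+1))).2
      exact ⟨le_trans ih.1 h1.1, le_trans h2.2 ih.2⟩
  have hlen : ∀ mu : Measure ℝ, IsCSP I mu → ∀ n,
      gammaLen (AFiter F I n mu) = suppSup (AFiter F I n mu) - suppInf (AFiter F I n mu) :=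
    fun _ _ _ => rfl
  have hαβ : ∀ mu : Measure ℝ, IsCSP I mu → ∀ n,
      suppInf (AFiter F I n mu) ≤ suppSup (AFiter F I n mu) :=
    fun mu hmu n => csp_suppInf_le_suppSup (hcsp mu hmu n)
  have hbdd : ∀ mu : Measure ℝ, IsCSP I mu →
      BddAbove (range fun n => suppInf (AFiter F I n mu)) := by
    intro mu hmu
    refine ⟨suppSup mu, ?_⟩
    rintro x ⟨n, rfl⟩
    exact le_trans (hαβ mu hmu n) (hmono mu hmu 0 n (Nat.zero_le n)).2
  -- lengths tend to zero
  have hlen0 : ∀ mu : Measure ℝ, IsCSP I mu → ∀ ε > 0, ∃ n,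
      gammaLen (AFiter F I n mu) < ε := by
    intro mu hmu ε hε
    by_contra hcon
    push_neg at hcon
    obtain ⟨ρ, hρ0, hρ⟩ := AF_contract hab hF T hT hbd hε
    have hdec : ∀ n, gammaLen (AFiter F I n mu) ≤ gammaLen mu - n * ρ := by
      intro n
      induction n with
      | zero => simp [hiter0]
      | succ n ih =>
        have := hρ (AFiter F I n mu) (hcsp mu hmu n) (hcon n)
        rw [← hiterS n mu] at this
        push_cast
        linarith
    obtain ⟨n, hn⟩ := exists_nat_gt ((gammaLen mu - ε)/ρ)
    have h1 := hcon n
    have h2 := hdec n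
    have : (gammaLen mu - ε) < n * ρ := by
      rw [div_lt_iff₀ hρ0] at hn
      linarith
    linarith
  -- any invariant mean is trapped in every iterated gamma set
  have htrap : ∀ M : Measure ℝ → ℝ, IsMean I M → IsInvariantMean F I M →
      ∀ mu : Measure ℝ, IsCSP I mu → ∀ n, M mu ∈ gammaSet (AFiter F I n mu) := by
    intro M hM hMinv mu hmu n
    have hMeq : ∀ k, M (AFiter F I k mu) = M mu := by
      intro k
      induction k with
      | zero => rw [hiter0]
      | succ k ih => rw [hiterS, hMinv _ (hcsp mu hmu k), ih]
    have := hM (AFiter F I n mu) (hcsp mu hmu n)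
    rwa [hMeq n] at this
  -- the candidate mean
  refine ⟨LF F I, ⟨?_, ?_⟩, ?_⟩
  · -- IsMean
    intro mu hmu
    constructor
    · have h0 : suppInf (AFiter F I 0 mu) ≤ ⨆ n, suppInf (AFiter F I n mu) :=
        le_ciSup (hbdd mu hmu) 0
      rw [hiter0] at h0
      exact h0
    · refine ciSup_le fun n => ?_
      exact le_trans (hαβ mu hmu n) (hmono mu hmu 0 n (Nat.zero_le n)).2
  · -- invariance
    intro mu hmu
    have hrw : ∀ n, AFiter F I n (AF F I mu) = AFiter F I (n+1) mu := by
      intro n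
      rw [AFiter, AFiter, Function.iterate_succ_apply]
    have hAFcsp : IsCSP I (AF F I mu) := AF_csp hab hF hmu
    rw [LF, LF]
    apply le_antisymm
    · refine ciSup_le fun n => ?_
      rw [hrw n]
      exact le_ciSup (hbdd mu hmu) (n+1)
    · refine ciSup_le fun n => ?_
      have h1 : suppInf (AFiter F I n mu) ≤ suppInf (AFiter F I (n+1) mu) :=
        (hmono mu hmu n (n+1) (Nat.le_succ n)).1
      refine le_trans h1 ?_
      have := le_ciSup (hbdd (AF F I mu) hAFcsp) n
      rwa [hrw n] at this
  · -- uniqueness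
    intro K' ⟨hK'm, hK'inv⟩ mu hmu
    by_contra hne
    set ε := |K' mu - LF F I mu| with hε
    have hε0 : 0 < ε := abs_pos.2 (sub_ne_zero.2 hne)
    obtain ⟨n, hn⟩ := hlen0 mu hmu ε hε0
    have hK'mem := htrap K' hK'm hK'inv mu hmu n
    -- LF is also trapped
    have hLF1 : suppInf (AFiter F I n mu) ≤ LF F I mu := le_ciSup (hbdd mu hmu) n
    have hLF2 : LF F I mu ≤ suppSup (AFiter F I n mu) := by
      refine ciSup_le fun m => ?_
      rcases le_total m n with h | h
      · exact le_trans (hmono mu hmu m n h).1 (hαβ mu hmu n)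
      · exact le_trans (hαβ mu hmu m) (hmono mu hmu n m h).2
    rw [hlen mu hmu n] at hn
    have : ε ≤ suppSup (AFiter F I n mu) - suppInf (AFiter F I n mu) := by
      rw [hε]
      rcases abs_cases (K' mu - LF F I mu) with ⟨heq, -⟩ | ⟨heq, -⟩ <;>
        [skip; skip] <;> rw [heq] <;> linarith [hK'mem.1, hK'mem.2]
    linarith
end S7

theorem stmt17 (a b : ℝ) (hab : a ≤ b) (F : ℝ → ℝ → ℝ)
    (hF : Admissible F (Icc a b))
    (T : Finset (ℝ → ℝ)) (hT : ∀ f ∈ T, CM f (Icc a b))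
    (hbd : ∀ x ∈ Icc (0:ℝ) 1, ∃ l ∈ T, ∃ u ∈ T, ∀ mu : Measure ℝ, IsCSP (Icc a b) mu →
      QAM l (Icc a b) mu ≤ QAM (F x) (Icc a b) mu ∧
      QAM (F x) (Icc a b) mu ≤ QAM u (Icc a b) mu) :
    ∃ Kmean : Measure ℝ → ℝ,
      (IsMean (Icc a b) Kmean ∧ IsInvariantMean F (Icc a b) Kmean) ∧
      ∀ K' : Measure ℝ → ℝ, IsMean (Icc a b) K' ∧ IsInvariantMean F (Icc a b) K' →
        ∀ mu : Measure ℝ, IsCSP (Icc a b) mu → K' mu = Kmean mu := by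
  rcases eq_or_lt_of_le hab with rfl | hlt
  · -- degenerate case: a = b
    have hpt : ∀ mu : Measure ℝ, IsCSP (Icc a a) mu →
        suppInf mu = a ∧ suppSup mu = a := by
      intro mu hmu
      haveI := hmu.1
      have hsub : msupp mu ⊆ {a} := by
        simpa [Icc_self] using csp_msupp_subset hmu
      have hne := msupp_nonempty mu
      have heq : msupp mu = {a} := by
        rcases subset_singleton_iff_eq.1 hsub with h | h
        · exact absurd h hne.ne_empty
        · exact h
      rw [suppInf, suppSup, heq, csInf_singleton, csSup_singleton]
      exact ⟨rfl, rfl⟩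
    refine ⟨fun _ => a, ⟨?_, ?_⟩, ?_⟩
    · intro mu hmu
      rw [gammaSet, (hpt mu hmu).1, (hpt mu hmu).2]
      exact ⟨le_rfl, le_rfl⟩
    · intro mu _
      rfl
    · rintro K' ⟨hK'm, -⟩ mu hmu
      have := hK'm mu hmu
      rw [gammaSet, (hpt mu hmu).1, (hpt mu hmu).2] at this
      exact le_antisymm this.2 this.1
  · exact main_lt hlt hF T hT hbd
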